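/- For integers n >= k >= 1, let t_{n,k} be the tree with root a whose children are the trees t_u = b_u((c_{i_1} c_{i_2} ... c_{i_k})^n) for each injective tuple u = (i_1,...,i_k) in [n]^{falling k}. Then |t_{n,k}| = 1 + n^{falling k} + k*n*n^{falling k}, where n^{falling k} = n(n-1)...(n-k+1), and the degree entropy satisfies H^deg(t_{n,k}) <= C * n^{falling k} * log2(n) for some absolute constant C (for all n >= 2). -/

import Mathlib

/-- Last `k` entries of a list. -/
def lastN {α} (k : ℕ) (l : List α) : List α := l.drop (l.length - k)

/-- Generic empirical entropy in per-node form: for each node `e` of `D` we add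
`log2 (#{e' | cond e' = cond e} / #{e' | cond e' = cond e ∧ val e' = val e})`.
Grouping nodes by the pair `(cond, val)` recovers the usual form
`∑_z ∑_w m_{z,w} log2 (m_z / m_{z,w})`. -/
noncomputable def entropySum {α β γ : Type*} [DecidableEq β] [DecidableEq γ]
    (D : List α) (cond : α → β) (val : α → γ) : ℝ :=
  (D.map (fun e => Real.logb 2
    ((D.countP (fun e' => decide (cond e' = cond e)) : ℝ) /
     (D.countP (fun e' => decide (cond e' = cond e ∧ val e' = val e)) : ℝ)))).sum

/-- `k`-label-history given the list of ancestor labels (padded with `box`). -/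
def kLabHist {σ} (box : σ) (k : ℕ) (h : List σ) : List σ :=
  lastN k (List.replicate k box ++ h)
-- Unranked ordered labeled trees and forests.
mutual
inductive UTree (σ : Type) where
  | node (a : σ) (children : UForest σ) : UTree σ
inductive UForest (σ : Type) where
  | nil : UForest σ
  | cons (t : UTree σ) (f : UForest σ) : UForest σ
end

/-- Number of trees in a forest. -/
def UForest.len {σ} : UForest σ → ℕ
  | .nil => 0
  | .cons _ f => 1 + f.len

mutual
/-- List of (label-history, label, degree) triples, one per node. -/
def udata {σ} (hist : List σ) : UTree σ → List (List σ × σ × ℕ)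
  | .node a f => (hist, a, f.len) :: fudata (hist ++ [a]) f
/-- Node data of a forest of subtrees rooted at label-history `hist`. -/
def fudata {σ} (hist : List σ) : UForest σ → List (List σ × σ × ℕ)
  | .nil => []
  | .cons t f => udata hist t ++ fudata hist f
end

/-- Number of nodes of an unranked tree. -/
def sizeU {σ} (t : UTree σ) : ℕ := (udata [] t).length
/-- `k`-th order label entropy `H^ℓ_k` of an unranked tree. -/
noncomputable def HlU {σ} [DecidableEq σ] (box : σ) (k : ℕ) (t : UTree σ) : ℝ :=
  entropySum (udata [] t) (fun e => kLabHist box k e.1) (fun e => e.2.1)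

/-- `k`-th order label-degree entropy `H^{ℓ,deg}_k` of an unranked tree. -/
noncomputable def HldU {σ} [DecidableEq σ] (box : σ) (k : ℕ) (t : UTree σ) : ℝ :=
  entropySum (udata [] t) (fun e => (kLabHist box k e.1, e.2.1)) (fun e => e.2.2)

/-- `k`-th order degree-label entropy `H^{deg,ℓ}_k` of an unranked tree. -/
noncomputable def HdlU {σ} [DecidableEq σ] (box : σ) (k : ℕ) (t : UTree σ) : ℝ :=
  entropySum (udata [] t) (fun e => (kLabHist box k e.1, e.2.2)) (fun e => e.2.1)

/-- Degree entropy `H^deg` of an unranked tree: `∑_i n_i log2(|t|/n_i)`. -/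
noncomputable def HdegU {σ} [DecidableEq σ] (t : UTree σ) : ℝ :=
  entropySum (udata [] t) (fun _ => ()) (fun e => e.2.2)

/-- Label alphabet for `t_{n,k}`: a root symbol `a`, symbols `b u` indexed by tuples `u`,
and symbols `c i` indexed by numbers `i`. -/
inductive Lab where
  | a : Lab
  | b (u : List ℕ) : Lab
  | c (i : ℕ) : Lab
deriving DecidableEq

/-- A single leaf node with label `x`. -/
def leafU {σ} (x : σ) : UTree σ := .node x .nil

/-- Concatenation of forests. -/
def appendF {σ} : UForest σ → UForest σ → UForest σ
  | .nil, g => g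
  | .cons t f, g => .cons t (appendF f g)

/-- The forest of leaves `c_{i_1} c_{i_2} ⋯ c_{i_k}` for `u = (i_1, …, i_k)`. -/
def cChildren : List ℕ → UForest Lab
  | [] => .nil
  | i :: is => .cons (leafU (.c i)) (cChildren is)

/-- The forest `(c_{i_1} ⋯ c_{i_k})^n`. -/
def cycleF (u : List ℕ) : ℕ → UForest Lab
  | 0 => .nil
  | n + 1 => appendF (cChildren u) (cycleF u n)

/-- The tree `t_u = b_u((c_{i_1} ⋯ c_{i_k})^n)`. -/
def tU (n : ℕ) (u : List ℕ) : UTree Lab := .node (.b u) (cycleF u n)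

/-- The forest `t_{u_1} t_{u_2} ⋯ t_{u_m}` for a list of tuples. -/
def bForest (n : ℕ) : List (List ℕ) → UForest Lab
  | [] => .nil
  | u :: rest => .cons (tU n u) (bForest n rest)

/-- The tree `t_{n,k} = a(t_{u_1} ⋯ t_{u_m})`, given an enumeration `us` of the
injective `k`-tuples over `{0, …, n-1}`. -/
def tnk (n : ℕ) (us : List (List ℕ)) : UTree Lab := .node .a (bForest n us)

/-- `us` is an enumeration (without repetitions, in arbitrary order) of all injective
`k`-tuples over `{0, …, n-1}`. -/
def IsEnum (n k : ℕ) (us : List (List ℕ)) : Prop :=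
  us.Nodup ∧ ∀ u : List ℕ, u ∈ us ↔ (u.length = k ∧ u.Nodup ∧ ∀ i ∈ u, i < n)

-- ### auxiliary lemmas
lemma appendF_len {σ} : ∀ (f g : UForest σ), (appendF f g).len = f.len + g.len
  | .nil, g => by simp [appendF, UForest.len]
  | .cons t f, g => by simp [appendF, UForest.len, appendF_len f g]; omega

lemma cChildren_len (u : List ℕ) : (cChildren u).len = u.length := by
  induction u with
  | nil => simp [cChildren, UForest.len]
  | cons i is ih => simp [cChildren, UForest.len, ih]; omega

lemma cycleF_len (u : List ℕ) (n : ℕ) : (cycleF u n).len = n * u.length := by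
  induction n with
  | zero => simp [cycleF, UForest.len]
  | succ n ih => rw [cycleF, appendF_len, cChildren_len, ih]; ring

lemma bForest_len (n : ℕ) (us : List (List ℕ)) : (bForest n us).len = us.length := by
  induction us with
  | nil => simp [bForest, UForest.len]
  | cons u us ih => simp [bForest, UForest.len, ih]; omega

lemma fudata_appendF {σ} (h : List σ) : ∀ (f g : UForest σ),
    fudata h (appendF f g) = fudata h f ++ fudata h g
  | .nil, g => by simp [appendF, fudata]
  | .cons t f, g => by simp [appendF, fudata, fudata_appendF h f g]

lemma fudata_cChildren (h : List Lab) (u : List ℕ) :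
    fudata h (cChildren u) = u.map (fun i => (h, Lab.c i, 0)) := by
  induction u with
  | nil => simp [cChildren, fudata]
  | cons i is ih => simp [cChildren, fudata, udata, leafU, UForest.len, ih]

lemma fudata_cycleF_deg (h : List Lab) (u : List ℕ) (n : ℕ) :
    (fudata h (cycleF u n)).map (fun e => e.2.2) = List.replicate (n * u.length) 0 := by
  induction n with
  | zero => simp [cycleF, fudata]
  | succ n ih =>
    rw [cycleF, fudata_appendF, List.map_append, ih, fudata_cChildren, List.map_map]
    rw [show (n+1) * u.length = u.length + n * u.length by ring, List.replicate_add]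
    congr 1
    simp [List.map_const', List.eq_replicate_iff]

lemma udata_tU_deg (h : List Lab) (n : ℕ) (u : List ℕ) :
    (udata h (tU n u)).map (fun e => e.2.2) =
      (n * u.length) :: List.replicate (n * u.length) 0 := by
  rw [tU, udata, List.map_cons, fudata_cycleF_deg, cycleF_len]

lemma fudata_bForest_deg (h : List Lab) (n k : ℕ) (us : List (List ℕ))
    (hlen : ∀ u ∈ us, u.length = k) :
    (fudata h (bForest n us)).map (fun e => e.2.2) =
      (List.replicate us.length ((n*k) :: List.replicate (n*k) 0)).flatten := by
  induction us with
  | nil => simp [bForest, fudata]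
  | cons u us ih =>
    rw [bForest, fudata, List.map_append, udata_tU_deg,
      ih (fun v hv => hlen v (by simp [hv])), hlen u (by simp),
      List.length_cons, List.replicate_succ, List.flatten_cons]

lemma tnk_deg (n k : ℕ) (us : List (List ℕ)) (hlen : ∀ u ∈ us, u.length = k) :
    (udata [] (tnk n us)).map (fun e => e.2.2) =
      us.length :: (List.replicate us.length ((n*k) :: List.replicate (n*k) 0)).flatten := by
  rw [tnk, udata, List.map_cons, fudata_bForest_deg _ _ _ _ hlen, bForest_len]

noncomputable def Edeg (l : List ℕ) : ℝ :=
  (l.map (fun d => Real.logb 2 ((l.length : ℝ) / (l.count d : ℝ)))).sum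

lemma HdegU_eq_Edeg {σ} [DecidableEq σ] (t : UTree σ) :
    HdegU t = Edeg ((udata [] t).map (fun e => e.2.2)) := by
  unfold HdegU entropySum Edeg
  rw [List.map_map, List.length_map]
  apply congrArg List.sum
  apply List.map_congr_left
  intro e _
  simp only [Function.comp]
  congr 2
  · simp
  · rw [List.count, List.countP_map]
    norm_cast
    apply List.countP_congr
    intro e' _
    simp

lemma isEnum_length {n k : ℕ} {us : List (List ℕ)} (h : IsEnum n k us) :
    us.length = n.descFactorial k := by
  obtain ⟨hnd, hmem⟩ := h
  rw [← List.toFinset_card_of_nodup hnd]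
  have hcard : (Finset.univ : Finset (Fin k ↪ Fin n)).card = us.toFinset.card := by
    apply Finset.card_bij (fun f _ => List.ofFn (fun j => ((f j : Fin n) : ℕ)))
    · intro f _
      rw [List.mem_toFinset, hmem]
      refine ⟨by simp, ?_, ?_⟩
      · rw [List.nodup_ofFn]
        intro i j hij
        exact f.injective (Fin.val_injective hij)
      · intro i hi
        rw [List.mem_ofFn] at hi
        obtain ⟨j, rfl⟩ := hi
        exact (f j).isLt
    · intro f1 _ f2 _ hf
      have h2 := List.ofFn_injective hf
      ext j
      exact congrFun h2 j
    · intro u hu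
      rw [List.mem_toFinset, hmem] at hu
      obtain ⟨hlen, hnd', hlt⟩ := hu
      subst hlen
      refine ⟨⟨fun i => ⟨u.get i, hlt _ (u.get_mem i)⟩, ?_⟩, Finset.mem_univ _, ?_⟩
      · intro i j hij
        exact (List.nodup_iff_injective_get.mp hnd') (by simpa [Fin.ext_iff] using hij)
      · simp [List.ofFn_get]
  rw [← hcard, Finset.card_univ, Fintype.card_embedding_eq, Fintype.card_fin, Fintype.card_fin]

lemma le_descFactorial {n k : ℕ} (hk : 1 ≤ k) (hkn : k ≤ n) : n ≤ n.descFactorial k := by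
  induction k with
  | zero => omega
  | succ k ih =>
    rcases Nat.eq_zero_or_pos k with rfl | hk'
    · simp
    · have h1 : n ≤ n.descFactorial k := ih hk' (by omega)
      rw [Nat.descFactorial_succ]
      have : 1 ≤ n - k := by omega
      calc n ≤ n.descFactorial k := h1
        _ = 1 * n.descFactorial k := (one_mul _).symm
        _ ≤ (n - k) * n.descFactorial k := Nat.mul_le_mul_right _ this

set_option maxHeartbeats 2000000 in
/-- For `n ≥ k ≥ 1` and any enumeration `us` of the injective `k`-tuples over `[n]`,
`|t_{n,k}| = 1 + n^{falling k} + k·n·n^{falling k}`; moreover there is an absolute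
constant `C > 0` such that for all `n ≥ 2`,
`H^deg(t_{n,k}) ≤ C · n^{falling k} · log2 n`. -/
theorem tnk_size_and_Hdeg :
    (∀ n k : ℕ, ∀ us : List (List ℕ), 1 ≤ k → k ≤ n → IsEnum n k us →
      sizeU (tnk n us) =
        1 + n.descFactorial k + k * n * n.descFactorial k) ∧
    ∃ C : ℝ, 0 < C ∧ ∀ n k : ℕ, ∀ us : List (List ℕ),
      1 ≤ k → k ≤ n → 2 ≤ n → IsEnum n k us →
      HdegU (tnk n us) ≤ C * (n.descFactorial k : ℝ) * Real.logb 2 n := by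
  have hlen : ∀ n k : ℕ, ∀ us : List (List ℕ), IsEnum n k us → ∀ u ∈ us, u.length = k :=
    fun n k us h u hu => ((h.2 u).mp hu).1
  constructor
  · -- size part
    intro n k us hk hkn henum
    have hL := isEnum_length henum
    have hd := tnk_deg n k us (hlen n k us henum)
    have : sizeU (tnk n us) = ((udata [] (tnk n us)).map (fun e => e.2.2)).length := by
      rw [List.length_map]; rfl
    rw [this, hd]
    simp [List.length_flatten, List.map_replicate, List.sum_replicate, hL]
    ring
  · -- entropy part
    refine ⟨11, by norm_num, ?_⟩
    intro n k us hk hkn hn henum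
    set K := n * k with hK
    set L := us.length with hLdef
    have hL : L = n.descFactorial k := isEnum_length henum
    have hLn : n ≤ L := hL ▸ le_descFactorial hk hkn
    have hkL : k ≤ L := le_trans hkn hLn
    have hL2 : 2 ≤ L := le_trans hn hLn
    have hLpow : L ≤ n ^ k := hL ▸ Nat.descFactorial_le_pow n k
    have hK2 : 2 ≤ K := by
      calc 2 = 2 * 1 := by norm_num
      _ ≤ n * k := Nat.mul_le_mul hn hk
    have hKne : n * k ≠ 0 := by rw [← hK]; omega
    have hKne' : (0:ℕ) ≠ K := by omega
    have hLne : L ≠ 0 := by omega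
    have hLne' : (0:ℕ) ≠ L := by omega
    set blk : List ℕ := K :: List.replicate K 0 with hblk
    set dl : List ℕ := L :: (List.replicate L blk).flatten with hdl
    have hdeg : (udata [] (tnk n us)).map (fun e => e.2.2) = dl :=
      tnk_deg n k us (hlen n k us henum)
    rw [HdegU_eq_Edeg, hdeg]
    -- length of dl
    have hNnat : dl.length = 1 + L * (K + 1) := by
      simp [hdl, List.length_flatten, List.map_replicate, List.sum_replicate, hblk]
      ring
    -- counts
    have hc0 : dl.count 0 = K * L := by
      simp [hdl, List.count_cons, List.count_flatten, List.map_replicate,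
        List.sum_replicate, hblk, List.count_replicate, hKne, hLne, hKne', hLne']
      rw [if_neg (by omega : ¬ K = 0)]; ring
    have hcK : L ≤ dl.count K := by
      have h1 : (List.replicate L blk).flatten.count K = L := by
        simp [List.count_flatten, List.map_replicate, List.sum_replicate, hblk,
          List.count_cons, List.count_replicate, hKne, hKne']
      simp [hdl, List.count_cons, h1]
    have hcL : 1 ≤ dl.count L := by
      simp [hdl, List.count_cons]
    -- the entropy sum in closed form
    set g : ℕ → ℝ := fun d => Real.logb 2 ((dl.length : ℝ) / (dl.count d : ℝ)) with hg
    have hE : Edeg dl = g L + (L : ℝ) * (g K + (K : ℝ) * g 0) := by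
      rw [Edeg]
      conv_lhs => rw [hdl]
      rw [List.map_cons, List.sum_cons, List.map_flatten, List.map_replicate,
        List.sum_flatten, List.map_replicate, List.sum_replicate, hblk,
        List.map_cons, List.sum_cons, List.map_replicate, List.sum_replicate,
        nsmul_eq_mul, nsmul_eq_mul]
      try rw [← hdl]
      try rw [← hblk]
      try rfl
      try ring
    rw [hE]
    -- real-number bookkeeping
    have hb : (1:ℝ) < 2 := one_lt_two
    have hnR : (2:ℝ) ≤ (n:ℝ) := by exact_mod_cast hn
    have hLR : (2:ℝ) ≤ (L:ℝ) := by exact_mod_cast hL2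
    have hKR : (2:ℝ) ≤ (K:ℝ) := by exact_mod_cast hK2
    have hNpos : (0:ℝ) < (dl.length : ℝ) := by rw [hNnat]; positivity
    have hlogn : 1 ≤ Real.logb 2 n := by
      rw [← Real.logb_self_eq_one hb]
      exact Real.logb_le_logb_of_le hb (by norm_num) hnR
    have hlogn0 : 0 ≤ Real.logb 2 n := le_trans zero_le_one hlogn
    -- term 1
    have hT1 : g L ≤ 4 * (L:ℝ) * Real.logb 2 n := by
      have h1 : (dl.length : ℝ) / (dl.count L : ℝ) ≤ (dl.length : ℝ) := by
        have : (1:ℝ) ≤ (dl.count L : ℝ) := by exact_mod_cast hcL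
        calc (dl.length : ℝ) / (dl.count L : ℝ) ≤ (dl.length : ℝ) / 1 :=
          div_le_div_of_nonneg_left (le_of_lt hNpos) one_pos this
        _ = (dl.length : ℝ) := div_one _
      have hpos : (0:ℝ) < (dl.length : ℝ) / (dl.count L : ℝ) := by
        apply div_pos hNpos
        exact_mod_cast lt_of_lt_of_le one_pos hcL
      have h2 : dl.length ≤ n ^ (k + 3) := by
        rw [hNnat]
        have e1 : 1 + L * (K + 1) ≤ 2 * L * K := by nlinarith
        have e2 : K ≤ n * n := by rw [hK]; exact Nat.mul_le_mul_left n hkn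
        calc 1 + L * (K + 1) ≤ 2 * L * K := e1
          _ ≤ n * (n ^ k) * (n * n) := by
              apply Nat.mul_le_mul (Nat.mul_le_mul hn hLpow) e2
          _ = n ^ (k + 3) := by ring
      have h3 : g L ≤ Real.logb 2 ((n:ℝ) ^ (k + 3)) := by
        rw [hg]
        apply Real.logb_le_logb_of_le hb hpos
        calc (dl.length : ℝ) / (dl.count L : ℝ) ≤ (dl.length : ℝ) := h1
          _ ≤ (n:ℝ) ^ (k+3) := by exact_mod_cast h2
      rw [Real.logb_pow] at h3
      calc g L ≤ ((k:ℝ) + 3) * Real.logb 2 n := by exact_mod_cast h3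
        _ ≤ (4 * (L:ℝ)) * Real.logb 2 n := by
            apply mul_le_mul_of_nonneg_right _ hlogn0
            have : (k:ℝ) ≤ (L:ℝ) := by exact_mod_cast hkL
            linarith
        _ = 4 * (L:ℝ) * Real.logb 2 n := by ring
    -- term 2
    have hT2 : g K ≤ 3 * Real.logb 2 n := by
      have hcKpos : (0:ℝ) < (dl.count K : ℝ) := by
        exact_mod_cast lt_of_lt_of_le (by omega : 0 < L) hcK
      have hpos : (0:ℝ) < (dl.length : ℝ) / (dl.count K : ℝ) := div_pos hNpos hcKpos
      have h2 : dl.length ≤ L * n ^ 3 := by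
        rw [hNnat]
        have e2 : K ≤ n * n := by rw [hK]; exact Nat.mul_le_mul_left n hkn
        have e3 : n * n + 2 ≤ n ^ 3 := by nlinarith
        calc 1 + L * (K + 1) ≤ L * (K + 2) := by nlinarith
          _ ≤ L * (n * n + 2) := by apply Nat.mul_le_mul_left; omega
          _ ≤ L * n ^ 3 := Nat.mul_le_mul_left _ e3
      have h1 : (dl.length : ℝ) / (dl.count K : ℝ) ≤ (n:ℝ) ^ 3 := by
        have hLK : (L:ℝ) ≤ (dl.count K : ℝ) := by exact_mod_cast hcK
        have hLpos : (0:ℝ) < (L:ℝ) := by linarith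
        calc (dl.length : ℝ) / (dl.count K : ℝ) ≤ (dl.length : ℝ) / (L:ℝ) :=
            div_le_div_of_nonneg_left (le_of_lt hNpos) hLpos hLK
          _ ≤ ((L:ℝ) * (n:ℝ)^3) / (L:ℝ) := by
              apply (div_le_div_iff_of_pos_right hLpos).mpr
              exact_mod_cast h2
          _ = (n:ℝ)^3 := by field_simp
      have h3 : g K ≤ Real.logb 2 ((n:ℝ)^3) := Real.logb_le_logb_of_le hb hpos h1
      rw [Real.logb_pow] at h3
      calc g K ≤ (3:ℕ) * Real.logb 2 n := h3
        _ = 3 * Real.logb 2 n := by norm_num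
    -- term 3
    have hLpos : (0:ℝ) < (L:ℝ) := by linarith
    have hKpos : (0:ℝ) < (K:ℝ) := by linarith
    have hKL : (0:ℝ) < (K:ℝ) * (L:ℝ) := mul_pos hKpos hLpos
    set x : ℝ := (1 + (L:ℝ)) / ((K:ℝ) * (L:ℝ)) with hxdef
    have hx0 : 0 ≤ x := by positivity
    have hx : (dl.length : ℝ) / (dl.count 0 : ℝ) = 1 + x := by
      rw [hc0, hNnat, hxdef]
      push_cast
      field_simp
      ring
    have hlog12 : Real.logb 2 (1 + x) ≤ 2 * x := by
      have h1x : (0:ℝ) < 1 + x := by linarith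
      have hlg : Real.log (1 + x) ≤ x := by
        have := Real.log_le_sub_one_of_pos h1x
        linarith
      have hl2 : (0.5:ℝ) ≤ Real.log 2 := by
        have := Real.log_two_gt_d9
        norm_num at this ⊢
        linarith
      have hl2pos : (0:ℝ) < Real.log 2 := by linarith
      rw [Real.logb]
      calc Real.log (1 + x) / Real.log 2 ≤ x / Real.log 2 :=
            (div_le_div_iff_of_pos_right hl2pos).mpr hlg
        _ ≤ x / 0.5 := div_le_div_of_nonneg_left hx0 (by norm_num) hl2
        _ = 2 * x := by ring
    have hg0 : g 0 ≤ 2 * x := by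
      rw [hg]
      simpa [hx] using hlog12
    have hT3 : (L:ℝ) * ((K:ℝ) * g 0) ≤ 4 * (L:ℝ) * Real.logb 2 n := by
      have step1 : (L:ℝ) * ((K:ℝ) * g 0) ≤ (L:ℝ) * ((K:ℝ) * (2 * x)) := by
        apply mul_le_mul_of_nonneg_left _ (le_of_lt hLpos)
        exact mul_le_mul_of_nonneg_left hg0 (le_of_lt hKpos)
      have step2 : (L:ℝ) * ((K:ℝ) * (2 * x)) = 2 * (1 + (L:ℝ)) := by
        rw [hxdef]
        field_simp
      have step3 : 2 * (1 + (L:ℝ)) ≤ 4 * (L:ℝ) := by linarith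
      have step4 : 4 * (L:ℝ) ≤ 4 * (L:ℝ) * Real.logb 2 n := by nlinarith
      linarith
    -- combine
    have hDL : ((n.descFactorial k : ℕ) : ℝ) = (L:ℝ) := by exact_mod_cast hL.symm
    rw [hDL]
    have hT2' : (L:ℝ) * g K ≤ 3 * (L:ℝ) * Real.logb 2 n := by
      calc (L:ℝ) * g K ≤ (L:ℝ) * (3 * Real.logb 2 n) :=
            mul_le_mul_of_nonneg_left hT2 (le_of_lt hLpos)
        _ = 3 * (L:ℝ) * Real.logb 2 n := by ring
    have expand : (L:ℝ) * (g K + (K:ℝ) * g 0) = (L:ℝ) * g K + (L:ℝ) * ((K:ℝ) * g 0) := by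
      ring
    rw [expand]
    have : (11:ℝ) * (L:ℝ) * Real.logb 2 n
        = 4 * (L:ℝ) * Real.logb 2 n + 3 * (L:ℝ) * Real.logb 2 n
          + 4 * (L:ℝ) * Real.logb 2 n := by ring
    linarith
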